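/- Let α be an algebraic number that is a q-Weil number of weight w (i.e., every complex embedding of α has absolute value q^{w/2}), where q = p^r is a prime power, and suppose α is a unit at every finite place not lying above p (i.e., α and its conjugates are units away from p). If every q-slope of α (the value v_q(ι(α)) for each embedding ι : ℚ(α) → ℂ_p, where v_q is normalized by v_q(q)=1) lies in the interval [a,b], then w ∈ [2a, 2b]. -/

import Mathlib

open Module


/-- Let `α` be an algebraic number, generating a number field `E`,
which is a `q`-Weil number of weight `w` (every complex embedding of `α` has absolute
value `q^{w/2}`), where `q = p^r` is a prime power.  Suppose `α` is a unit at every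
finite place not lying above `p`, i.e. `α` is an algebraic integer and `p^m·α⁻¹` is an
algebraic integer for some `m`.  The `q`-slopes of `α` are the values `v(ι α)/r` for
embeddings `ι : E → ℚ̄_p`, where `v` is the unique valuation on the algebraic closure
of `ℚ_p` extending the `p`-adic valuation normalized by `v(p) = 1` (so that
`v(q)/r = 1`).  If every `q`-slope of `α` lies in `[a, b]`, then `w ∈ [2a, 2b]`. -/
theorem stmt_0 (p : ℕ) [Fact p.Prime] (r : ℕ) (hr : 0 < r) (q : ℕ) (hq : q = p ^ r)
    {E : Type*} [Field E] [Algebra ℚ E] [FiniteDimensional ℚ E]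
    (α : E) (hgen : Algebra.adjoin ℚ {α} = ⊤) (w : ℤ)
    (hWeil : ∀ σ : E →+* ℂ, ‖σ α‖ = (q : ℝ) ^ ((w : ℝ) / 2))
    (hint : IsIntegral ℤ α)
    (hunit : ∃ m : ℕ, IsIntegral ℤ ((p : E) ^ m * α⁻¹))
    (v : AlgebraicClosure ℚ_[p] → ℝ)
    (hvmul : ∀ x y : AlgebraicClosure ℚ_[p], x ≠ 0 → y ≠ 0 → v (x * y) = v x + v y)
    (hvadd : ∀ x y : AlgebraicClosure ℚ_[p],
      x ≠ 0 → y ≠ 0 → x + y ≠ 0 → min (v x) (v y) ≤ v (x + y))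
    (hvp : ∀ x : ℚ_[p], x ≠ 0 →
      v (algebraMap ℚ_[p] (AlgebraicClosure ℚ_[p]) x) = (x.valuation : ℝ))
    (a b : ℝ)
    (hslope : ∀ ι : E →+* AlgebraicClosure ℚ_[p],
      a ≤ v (ι α) / (r : ℝ) ∧ v (ι α) / (r : ℝ) ≤ b) :
    2 * a ≤ (w : ℝ) ∧ (w : ℝ) ≤ 2 * b := by
  classical
  obtain ⟨m, hβ⟩ := hunit
  have hp2 : 1 < p := (Fact.out : p.Prime).one_lt
  set n := finrank ℚ E with hn
  have hnpos : 0 < n := finrank_pos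
  have hcardC : Fintype.card (E →ₐ[ℚ] ℂ) = n := AlgHom.card (F := ℚ) (E := E) ℂ
  have hqpos : (0:ℝ) < (q:ℝ) := by
    rw [hq]; exact_mod_cast pow_pos (by omega : 0 < p) r
  have hα0 : α ≠ 0 := by
    intro h
    have hne : Nonempty (E →ₐ[ℚ] ℂ) := Fintype.card_pos_iff.mp (hcardC ▸ hnpos)
    obtain ⟨σ⟩ := hne
    have hw := hWeil (σ : E →+* ℂ)
    rw [show (σ : E →+* ℂ) α = σ α from rfl, h, map_zero, norm_zero] at hw
    exact absurd hw.symm (ne_of_gt (Real.rpow_pos_of_pos hqpos _))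
  set N : ℚ := Algebra.norm ℚ α with hNdef
  have hNne : N ≠ 0 := Algebra.norm_ne_zero_iff.mpr hα0
  have hNint : IsIntegral ℤ N := Algebra.isIntegral_norm ℚ hint
  obtain ⟨N', hN'⟩ := IsIntegrallyClosed.isIntegral_iff.mp hNint
  obtain ⟨M', hM'⟩ := IsIntegrallyClosed.isIntegral_iff.mp
    (Algebra.isIntegral_norm ℚ (x := (p : E) ^ m * α⁻¹) hβ)
  have hNM : N * Algebra.norm ℚ ((p : E) ^ m * α⁻¹) = (p:ℚ) ^ (m * n) := by
    rw [hNdef, ← map_mul]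
    have h1 : α * ((p : E) ^ m * α⁻¹) = algebraMap ℚ E ((p:ℚ) ^ m) := by
      field_simp
      simp
    rw [h1, Algebra.norm_algebraMap, ← pow_mul]
  have hNM' : N' * M' = (p:ℤ) ^ (m * n) := by
    have : ((N' * M' : ℤ) : ℚ) = (((p:ℤ) ^ (m * n) : ℤ) : ℚ) := by
      push_cast
      rw [show ((N' : ℚ)) = N from hN', show ((M' : ℚ)) = _ from hM']
      exact_mod_cast hNM
    exact_mod_cast this
  have hdvd : N'.natAbs ∣ p ^ (m * n) := by
    have h1 : N' ∣ (p:ℤ) ^ (m * n) := ⟨M', hNM'.symm⟩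
    have h2 := Int.natAbs_dvd_natAbs.mpr h1
    have h3 : ((p:ℤ) ^ (m * n)).natAbs = p ^ (m * n) := by
      simp [Int.natAbs_pow]
    exact h3 ▸ h2
  obtain ⟨k, hk, hkeq⟩ := (Nat.dvd_prime_pow Fact.out).mp hdvd
  have hNabs : |N| = (p:ℚ) ^ k := by
    rw [← hN', eq_intCast, ← Int.cast_abs, Int.abs_eq_natAbs, hkeq]
    push_cast
    ring
  -- archimedean side
  have hembC : algebraMap ℚ ℂ N = ∏ σ : E →ₐ[ℚ] ℂ, σ α :=
    Algebra.norm_eq_prod_embeddings ℚ ℂ α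
  have habs : (p:ℝ) ^ k = ((q:ℝ) ^ ((w:ℝ)/2)) ^ n := by
    have h1 : ‖algebraMap ℚ ℂ N‖ = ∏ σ : E →ₐ[ℚ] ℂ, ‖σ α‖ := by
      rw [hembC, norm_prod]
    have h2 : ∀ σ : E →ₐ[ℚ] ℂ, ‖σ α‖ = (q : ℝ) ^ ((w : ℝ) / 2) :=
      fun σ => hWeil (σ : E →+* ℂ)
    rw [Finset.prod_congr rfl (fun σ _ => h2 σ), Finset.prod_const, Finset.card_univ,
      hcardC] at h1
    have h3 : ‖algebraMap ℚ ℂ N‖ = (p:ℝ) ^ k := by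
      rw [eq_ratCast (algebraMap ℚ ℂ) N,
        show ((N : ℚ) : ℂ) = (((N : ℝ) : ℝ) : ℂ) by push_cast; ring,
        Complex.norm_real, Real.norm_eq_abs, ← Rat.cast_abs, hNabs]
      push_cast
      ring
    rw [← h3, h1]
  have hbase : (1:ℝ) < (p:ℝ) := by exact_mod_cast hp2
  have hlogp : Real.log p ≠ 0 := ne_of_gt (Real.log_pos hbase)
  have hkw : (k:ℝ) * Real.log p = ((n:ℝ) * ((w:ℝ)/2 * (r:ℝ))) * Real.log p := by
    have h := congrArg Real.log habs
    rw [Real.log_pow, Real.log_pow, Real.log_rpow hqpos] at h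
    have hlq : Real.log q = (r:ℝ) * Real.log p := by
      rw [hq]; push_cast; rw [Real.log_pow]
    rw [hlq] at h
    push_cast at h ⊢
    linarith [h]
  have hk2 : (k:ℝ) = (n:ℝ) * ((w:ℝ)/2 * (r:ℝ)) := mul_right_cancel₀ hlogp hkw
  -- p-adic side
  have hembF : algebraMap ℚ (AlgebraicClosure ℚ_[p]) N
      = ∏ ι : E →ₐ[ℚ] AlgebraicClosure ℚ_[p], ι α :=
    Algebra.norm_eq_prod_embeddings ℚ (AlgebraicClosure ℚ_[p]) α
  have hcomp : algebraMap ℚ (AlgebraicClosure ℚ_[p]) N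
      = algebraMap ℚ_[p] (AlgebraicClosure ℚ_[p]) (algebraMap ℚ ℚ_[p] N) :=
    RingHom.congr_fun
      (Subsingleton.elim (algebraMap ℚ (AlgebraicClosure ℚ_[p]))
        ((algebraMap ℚ_[p] (AlgebraicClosure ℚ_[p])).comp (algebraMap ℚ ℚ_[p]))) N
  have hNQp : algebraMap ℚ ℚ_[p] N ≠ 0 := by
    simpa using (map_ne_zero (algebraMap ℚ ℚ_[p])).mpr hNne
  have hvN : v (algebraMap ℚ (AlgebraicClosure ℚ_[p]) N) = (k : ℝ) := by
    rw [hcomp, hvp _ hNQp]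
    have h1 : algebraMap ℚ ℚ_[p] N = ((N' : ℤ) : ℚ_[p]) := by
      rw [eq_ratCast (algebraMap ℚ ℚ_[p]) N, ← hN', eq_intCast (algebraMap ℤ ℚ) N']
      push_cast
      ring
    rw [h1, Padic.valuation_intCast]
    have h2 : padicValInt p N' = k := by
      unfold padicValInt
      rw [hkeq]
      exact padicValNat.prime_pow k
    rw [h2]
    simp
  have hι0 : ∀ ι : E →ₐ[ℚ] AlgebraicClosure ℚ_[p], ι α ≠ 0 := fun ι h =>
    hα0 ((ι : E →+* AlgebraicClosure ℚ_[p]).injective (by simpa using h))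
  have hv1 : v 1 = 0 := by
    have h := hvmul 1 1 one_ne_zero one_ne_zero
    rw [mul_one] at h; linarith
  have hsum : v (∏ ι : E →ₐ[ℚ] AlgebraicClosure ℚ_[p], ι α)
      = ∑ ι : E →ₐ[ℚ] AlgebraicClosure ℚ_[p], v (ι α) := by
    have key : ∀ s : Finset (E →ₐ[ℚ] AlgebraicClosure ℚ_[p]),
        v (∏ ι ∈ s, ι α) = ∑ ι ∈ s, v (ι α) := by
      intro s
      induction s using Finset.cons_induction with
      | empty => simpa using hv1
      | cons ι s hιs ih =>
        rw [Finset.prod_cons, Finset.sum_cons,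
          hvmul _ _ (hι0 ι) (Finset.prod_ne_zero_iff.mpr fun i _ => hι0 i), ih]
    exact key Finset.univ
  have hrpos : (0:ℝ) < (r:ℝ) := by exact_mod_cast hr
  have hbound : ∀ ι : E →ₐ[ℚ] AlgebraicClosure ℚ_[p],
      a * r ≤ v (ι α) ∧ v (ι α) ≤ b * r := by
    intro ι
    obtain ⟨h1, h2⟩ := hslope (ι : E →+* AlgebraicClosure ℚ_[p])
    exact ⟨(le_div_iff₀ hrpos).mp h1, (div_le_iff₀ hrpos).mp h2⟩
  have hcardF : Fintype.card (E →ₐ[ℚ] AlgebraicClosure ℚ_[p]) = n :=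
    AlgHom.card (F := ℚ) (E := E) (AlgebraicClosure ℚ_[p])
  have hks : (k : ℝ) = ∑ ι : E →ₐ[ℚ] AlgebraicClosure ℚ_[p], v (ι α) := by
    rw [← hsum, ← hembF, hvN]
  have hlow : (n:ℝ) * (a * r) ≤ (k:ℝ) := by
    rw [hks]
    have h := Finset.card_nsmul_le_sum Finset.univ
      (fun ι : E →ₐ[ℚ] AlgebraicClosure ℚ_[p] => v (ι α)) (a * r)
      (fun ι _ => (hbound ι).1)
    rwa [Finset.card_univ, hcardF, nsmul_eq_mul] at h
  have hhigh : (k:ℝ) ≤ (n:ℝ) * (b * r) := by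
    rw [hks]
    have h := Finset.sum_le_card_nsmul Finset.univ
      (fun ι : E →ₐ[ℚ] AlgebraicClosure ℚ_[p] => v (ι α)) (b * r)
      (fun ι _ => (hbound ι).2)
    rwa [Finset.card_univ, hcardF, nsmul_eq_mul] at h
  have hnpos' : (0:ℝ) < (n:ℝ) := by exact_mod_cast hnpos
  rw [hk2] at hlow hhigh
  constructor
  · have h2 : a * r ≤ (w:ℝ)/2 * r := le_of_mul_le_mul_left hlow hnpos'
    have h3 : a ≤ (w:ℝ)/2 := le_of_mul_le_mul_right h2 hrpos
    linarith
  · have h2 : (w:ℝ)/2 * r ≤ b * r := le_of_mul_le_mul_left hhigh hnpos'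
    have h3 : (w:ℝ)/2 ≤ b := le_of_mul_le_mul_right h2 hrpos
    linarith
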